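/- Let Λ be a numerical semigroup with multiplicity λ₁ and e effective generators. If λ₁ > 2e, then Λ has only finitely many descendants in the semigroup tree; i.e., Λ does not belong to any infinite chain. -/

import Mathlib

def IsNumericalSemigroup (Λ : Set ℕ) : Prop :=
  0 ∈ Λ ∧ (∀ a ∈ Λ, ∀ b ∈ Λ, a + b ∈ Λ) ∧ Λᶜ.Finite

noncomputable def sgGenus (Λ : Set ℕ) : ℕ := Λᶜ.ncard

noncomputable def sgFrobenius (Λ : Set ℕ) : ℕ := sSup Λᶜ

noncomputable def sgMultiplicity (Λ : Set ℕ) : ℕ := sInf (Λ \ {0})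

def IsMinimalGenerator (Λ : Set ℕ) (μ : ℕ) : Prop :=
  μ ∈ Λ ∧ μ ≠ 0 ∧ ¬ ∃ a ∈ Λ, ∃ b ∈ Λ, a ≠ 0 ∧ b ≠ 0 ∧ a + b = μ

def IsEffectiveGenerator (Λ : Set ℕ) (μ : ℕ) : Prop :=
  IsMinimalGenerator Λ μ ∧ sgFrobenius Λ < μ

def IsOrdinary (Λ : Set ℕ) : Prop := ∃ m : ℕ, Λ = {0} ∪ {n : ℕ | m ≤ n}

def IsStrongGenerator (Λ : Set ℕ) (μ : ℕ) : Prop :=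
  IsEffectiveGenerator Λ μ ∧ IsMinimalGenerator (Λ \ {μ}) (sgMultiplicity Λ + μ)

def IsChildOf (Λ' Λ : Set ℕ) : Prop :=
  IsNumericalSemigroup Λ' ∧ Λ' ⊂ Λ ∧ Λ' ∪ {sgFrobenius Λ'} = Λ

def sgDescendants (Λ : Set ℕ) : Set (Set ℕ) :=
  {Λ' | Relation.TransGen IsChildOf Λ' Λ}

theorem stmt17 (Λ : Set ℕ) (hΛ : IsNumericalSemigroup Λ)
    (h : 2 * {μ : ℕ | IsEffectiveGenerator Λ μ}.ncard < sgMultiplicity Λ) :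
    (sgDescendants Λ).Finite := by
  classical
  obtain ⟨h0, hadd, hfin⟩ := hΛ
  set m := sgMultiplicity Λ with hm_def
  set F := sgFrobenius Λ with hF_def
  set E := {μ : ℕ | IsEffectiveGenerator Λ μ} with hE_def
  -- everything above the Frobenius number is in Λ
  have hgt : ∀ n : ℕ, F < n → n ∈ Λ := by
    intro n hn
    by_contra hnn
    have : n ≤ F := le_csSup hfin.bddAbove hnn
    omega
  have hne : (Λ \ {0}).Nonempty := ⟨F + 1, hgt _ (lt_add_one F), by simp⟩
  have hm_mem : m ∈ Λ ∧ m ≠ 0 := by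
    have := Nat.sInf_mem hne
    exact ⟨this.1, fun hc => this.2 (Set.mem_singleton_iff.mpr hc)⟩
  have hm_le : ∀ a, a ∈ Λ → a ≠ 0 → m ≤ a := by
    intro a ha ha0
    exact Nat.sInf_le ⟨ha, ha0⟩
  -- effective generators live in (F, F+m]
  have hE_sub : E ⊆ Set.Icc (F + 1) (F + m) := by
    rintro μ ⟨⟨hμΛ, hμ0, hmin⟩, hμF⟩
    refine ⟨by omega, ?_⟩
    by_contra hcon
    have h1 : F < μ - m := by omega
    exact hmin ⟨m, hm_mem.1, μ - m, hgt _ h1, hm_mem.2, by omega, by omega⟩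
  have hE_fin : E.Finite := (Set.finite_Icc _ _).subset hE_sub
  -- m ≥ 2
  have hm2 : 2 ≤ m := by
    rcases Nat.lt_or_ge m 2 with hm1 | hm1
    · exfalso
      have hm1' : m = 1 := by omega
      have h1Λ : 1 ∈ Λ := by rw [← hm1']; exact hm_mem.1
      have hall : ∀ n : ℕ, n ∈ Λ := by
        intro n
        induction n with
        | zero => exact h0
        | succ k ih => exact hadd k ih 1 h1Λ
      have hcemp : Λᶜ = ∅ := by
        ext n; simp [hall n]
      have hF0 : F = 0 := by
        rw [hF_def, sgFrobenius, hcemp, csSup_empty]; rfl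
      have h1E : (1 : ℕ) ∈ E := by
        refine ⟨⟨h1Λ, one_ne_zero, ?_⟩, by omega⟩
        rintro ⟨a, _, b, _, ha0, hb0, hab⟩
        omega
      have : 0 < E.ncard := (Set.ncard_pos hE_fin).mpr ⟨1, h1E⟩
      omega
    · omega
  have h1c : (1 : ℕ) ∉ Λ := fun hc => by have := hm_le 1 hc one_ne_zero; omega
  have hcne : Λᶜ.Nonempty := ⟨1, h1c⟩
  have hF_notin : F ∉ Λ := Nat.sSup_mem hcne hfin.bddAbove
  -- m < F (Λ is not ordinary)
  have hmF : m < F := by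
    have hFne : F ≠ m := fun hc => hF_notin (hc ▸ hm_mem.1)
    rcases Nat.lt_or_ge m F with h' | h'
    · exact h'
    · exfalso
      have hsub2 : Set.Icc m (2 * m - 1) ⊆ E := by
        rintro j ⟨hj1, hj2⟩
        have hjΛ : j ∈ Λ := hgt j (by omega)
        refine ⟨⟨hjΛ, by omega, ?_⟩, by omega⟩
        rintro ⟨a, ha, b, hb, ha0, hb0, hab⟩
        have := hm_le a ha ha0
        have := hm_le b hb hb0
        omega
      have hcard : (Set.Icc m (2 * m - 1)).ncard ≤ E.ncard :=
        Set.ncard_le_ncard hsub2 hE_fin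
      have : (Set.Icc m (2 * m - 1)).ncard = m := by
        rw [← Finset.coe_Icc, Set.ncard_coe_finset, Nat.card_Icc]
        omega
      omega
  -- the finset of effective generators and residues
  have hES := Set.ncard_eq_toFinset_card E hE_fin
  set ES := hE_fin.toFinset with hES_def
  set ResE := ES.image (· % m) with hResE_def
  -- the invariant
  set Inv : Set ℕ → Prop := fun Λ' =>
    Λ' ⊆ Λ ∧ Λ'ᶜ.Finite ∧
      ∀ x ∈ Λ \ Λ', F < x ∧ x ≤ 2 * F + 2 * m ∧ ∃ y ∈ E, x % m = y % m
    with hInv_def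
  -- main step lemma
  have step : ∀ Λ' Λ'' : Set ℕ, Inv Λ' → IsChildOf Λ'' Λ' → Inv Λ'' := by
    intro Λ' Λ'' hInv hchild
    obtain ⟨hsub, hfin', hR⟩ := hInv
    obtain ⟨⟨h0'', hadd'', hfin''⟩, hss, hun⟩ := hchild
    set x := sgFrobenius Λ'' with hx_def
    have h1'' : (1 : ℕ) ∉ Λ'' := fun hc => h1c (hsub (hss.1 hc))
    have hx_notin : x ∉ Λ'' := Nat.sSup_mem ⟨1, h1''⟩ hfin''.bddAbove
    have hxΛ' : x ∈ Λ' := by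
      rw [← hun]; exact Set.mem_union_right _ rfl
    have hsub'' : Λ'' ⊆ Λ' := hss.1
    have hdiff : Λ' \ Λ'' = {x} := by
      apply Set.Subset.antisymm
      · rintro a ⟨ha1, ha2⟩
        rw [← hun] at ha1
        rcases ha1 with ha1 | ha1
        · exact absurd ha1 ha2
        · exact ha1
      · rintro a rfl
        exact ⟨hxΛ', hx_notin⟩
    have hdiffΛ : Λ \ Λ'' = (Λ \ Λ') ∪ {x} := by
      ext a
      constructor
      · rintro ⟨ha1, ha2⟩
        by_cases ha3 : a ∈ Λ'
        · right; have : a ∈ Λ' \ Λ'' := ⟨ha3, ha2⟩; rwa [hdiff] at this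
        · left; exact ⟨ha1, ha3⟩
      · rintro (⟨ha1, ha2⟩ | ha)
        · exact ⟨ha1, fun hc => ha2 (hsub'' hc)⟩
        · rcases ha with rfl
          exact ⟨hsub hxΛ', hx_notin⟩
    -- Frobenius comparison
    have h1' : (1 : ℕ) ∉ Λ' := fun hc => h1c (hsub hc)
    have hF'_notin : sgFrobenius Λ' ∉ Λ' := Nat.sSup_mem ⟨1, h1'⟩ hfin'.bddAbove
    have hFF' : F ≤ sgFrobenius Λ' :=
      csSup_le_csSup hfin'.bddAbove hcne (Set.compl_subset_compl.mpr hsub)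
    have hF'x : sgFrobenius Λ' < x := by
      have hle : sgFrobenius Λ' ≤ x := by
        apply csSup_le_csSup hfin''.bddAbove ⟨1, h1'⟩
        exact Set.compl_subset_compl.mpr hsub''
      rcases Nat.lt_or_ge (sgFrobenius Λ') x with h' | h'
      · exact h'
      · exfalso
        have : sgFrobenius Λ' = x := by omega
        exact hF'_notin (this ▸ hxΛ')
    have hFx : F < x := by omega
    -- x is a minimal generator of Λ'
    have hx_min : ∀ b ∈ Λ', ∀ c ∈ Λ', b ≠ 0 → c ≠ 0 → b + c ≠ x := by
      intro b hb c hc hb0 hc0 hbc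
      have hbx : b ≠ x := by omega
      have hcx : c ≠ x := by omega
      have hb'' : b ∈ Λ'' := by
        by_contra hcon
        have : b ∈ Λ' \ Λ'' := ⟨hb, hcon⟩
        rw [hdiff] at this; exact hbx this
      have hc'' : c ∈ Λ'' := by
        by_contra hcon
        have : c ∈ Λ' \ Λ'' := ⟨hc, hcon⟩
        rw [hdiff] at this; exact hcx this
      exact hx_notin (hbc ▸ hadd'' b hb'' c hc'')
    have hm_in' : m ∈ Λ' := by
      by_contra hcon
      have := (hR m ⟨hm_mem.1, hcon⟩).1
      omega
    -- the residue property for x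
    have hres : ∃ y ∈ E, x % m = y % m := by
      have hxm : x - m ∉ Λ' := by
        intro hcon
        exact hx_min m hm_in' (x - m) hcon hm_mem.2 (by omega) (by omega)
      by_cases hin2 : x - m ∈ Λ
      · obtain ⟨_, _, y, hy, hyres⟩ := hR (x - m) ⟨hin2, hxm⟩
        refine ⟨y, hy, ?_⟩
        have hxe : x = (x - m) + m := by omega
        rw [hxe, Nat.add_mod_right, hyres]
      · -- x - m ≤ F, so x ≤ F + m and x is an effective generator of Λ
        have hxFm : x ≤ F + m := by
          by_contra hcon
          exact hin2 (hgt _ (by omega))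
        refine ⟨x, ⟨⟨hsub hxΛ', by omega, ?_⟩, hFx⟩, rfl⟩
        rintro ⟨a, ha, b, hb, ha0, hb0, hab⟩
        by_cases haΛ' : a ∈ Λ'
        · by_cases hbΛ' : b ∈ Λ'
          · exact hx_min a haΛ' b hbΛ' ha0 hb0 hab
          · have hFb := (hR b ⟨hb, hbΛ'⟩).1
            have : m ≤ a := hm_le a ha ha0
            omega
        · have hFa := (hR a ⟨ha, haΛ'⟩).1
          have : m ≤ b := hm_le b hb hb0
          omega
    -- the bound for x
    have hbound : x ≤ 2 * F + 2 * m := by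
      set t := x % m with ht_def
      have htm : t < m := Nat.mod_lt _ (by omega)
      set badU := ResE ∪ ResE.image (fun s => (t + m - s) % m) with hbadU_def
      have hres_mem : ∀ z y : ℕ, y ∈ E → z % m = y % m → z % m ∈ ResE := by
        intro z y hy hzy
        rw [hResE_def]
        exact Finset.mem_image.mpr ⟨y, hE_fin.mem_toFinset.mpr hy, hzy.symm⟩
      have hbad_card : badU.card < m := by
        have h1 : badU.card ≤ ResE.card + (ResE.image (fun s => (t + m - s) % m)).card :=
          Finset.card_union_le _ _
        have h2 : (ResE.image (fun s => (t + m - s) % m)).card ≤ ResE.card :=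
          Finset.card_image_le
        have h3 : ResE.card ≤ ES.card := Finset.card_image_le
        omega
      have hex : ∃ u ∈ Finset.range m, u ∉ badU := by
        by_contra hcon
        push_neg at hcon
        have : Finset.range m ⊆ badU := fun u hu => hcon u hu
        have := Finset.card_le_card this
        simp only [Finset.card_range] at this
        omega
      obtain ⟨u, hu_mem, hu_bad⟩ := hex
      have hum : u < m := Finset.mem_range.mp hu_mem
      set c := u + m * (F / m + 1) with hc_def
      have hcu : c % m = u := by
        rw [hc_def, Nat.add_mul_mod_self_left, Nat.mod_eq_of_lt hum]
      have hdiv : m * (F / m) + F % m = F := Nat.div_add_mod F m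
      have hFmod : F % m < m := Nat.mod_lt _ (by omega)
      have hcF : F < c := by
        have : m * (F / m + 1) = m * (F / m) + m := by ring
        omega
      have hc_le : c ≤ F + 2 * m := by
        have : m * (F / m + 1) = m * (F / m) + m := by ring
        omega
      have hc_mem : c ∈ Λ := hgt c hcF
      have hc_in' : c ∈ Λ' := by
        by_contra hcon
        obtain ⟨_, _, y, hy, hyres⟩ := hR c ⟨hc_mem, hcon⟩
        have : u ∈ ResE := by
          have := hres_mem c y hy hyres
          rwa [hcu] at this
        exact hu_bad (Finset.mem_union_left _ this)
      by_contra hcon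
      have hxc : F < x - c := by omega
      have hxcΛ : x - c ∈ Λ := hgt _ hxc
      have hxc_in' : x - c ∈ Λ' := by
        by_contra hcon2
        obtain ⟨_, _, y, hy, hyres⟩ := hR (x - c) ⟨hxcΛ, hcon2⟩
        have hs_mem : (x - c) % m ∈ ResE := hres_mem _ y hy hyres
        set s := (x - c) % m with hs_def
        have hsm : s < m := Nat.mod_lt _ (by omega)
        -- t = (u + s) % m
        have hxe : x = c + (x - c) := by omega
        have htus : t = (u + s) % m := by
          rw [ht_def, hxe, Nat.add_mod, hcu, ← hs_def]
        have hcase : u + s = t ∨ u + s = t + m := by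
          rcases Nat.lt_or_ge (u + s) m with h' | h'
          · left; rw [htus, Nat.mod_eq_of_lt h']
          · right
            have h2m : u + s - m < m := by omega
            have : (u + s) % m = (u + s - m) % m := by
              conv_lhs => rw [show u + s = (u + s - m) + m by omega]
              rw [Nat.add_mod_right]
            rw [htus, this, Nat.mod_eq_of_lt h2m]
            omega
        have hu_im : u = (t + m - s) % m := by
          rcases hcase with h' | h'
          · have : t + m - s = u + m := by omega
            rw [this, Nat.add_mod_right, Nat.mod_eq_of_lt hum]
          · have : t + m - s = u := by omega
            rw [this, Nat.mod_eq_of_lt hum]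
        exact hu_bad (Finset.mem_union_right _
          (Finset.mem_image.mpr ⟨s, hs_mem, hu_im.symm⟩))
      exact hx_min c hc_in' (x - c) hxc_in' (by omega) (by omega) (by omega)
    -- assemble the invariant for Λ''
    refine ⟨hsub''.trans hsub, hfin'', ?_⟩
    intro z hz
    rw [hdiffΛ] at hz
    rcases hz with hz | hz
    · exact hR z hz
    · rcases hz with rfl
      exact ⟨hFx, hbound, hres⟩
  -- every descendant satisfies the invariant
  have hInvΛ : Inv Λ := by
    refine ⟨subset_rfl, hfin, ?_⟩
    intro z hz
    simp at hz
  have hDesc : ∀ Λ' ∈ sgDescendants Λ, Inv Λ' := by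
    intro Λ' hΛ'
    refine Relation.TransGen.head_induction_on (motive := fun a _ => Inv a) hΛ' ?_ ?_
    · intro a ha
      exact step Λ a hInvΛ ha
    · intro a c h' _ ih
      exact step c a ih h'
  -- conclude finiteness
  apply Set.Finite.of_finite_image (f := fun Λ' => Λ \ Λ')
  · apply Set.Finite.subset ((Set.finite_Icc (F + 1) (2 * F + 2 * m)).finite_subsets)
    rintro tset ⟨Λ', hΛ', rfl⟩
    obtain ⟨hsub, _, hR⟩ := hDesc Λ' hΛ'
    intro z hz
    obtain ⟨hz1, hz2, _⟩ := hR z hz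
    exact ⟨by omega, hz2⟩
  · intro s hs tt htt hst
    obtain ⟨hsub1, _, _⟩ := hDesc s hs
    obtain ⟨hsub2, _, _⟩ := hDesc tt htt
    have h1 := Set.diff_diff_cancel_left hsub1
    have h2 := Set.diff_diff_cancel_left hsub2
    simp only at hst
    rw [← h1, ← h2, hst]
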